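/- Let φ : ℂ → M₂(ℝ) be the ring homomorphism given by φ(a+ib) = [[a, −b], [b, a]], let i : ℝ → ℂ be the inclusion, let φ_* : Mod-M₂(ℝ) ⥤ Mod-ℂ and i_* : Mod-ℂ ⥤ Mod-ℝ be the restriction of scalars functors on right module categories, and let φ^* be any functor left adjoint to φ_*. Then φ^* is heavily i_*-separable. -/

import Mathlib

open CategoryTheory

/-- A functor `F : C ⥤ D` is *heavily `I`-separable* (heavy separability of the second kind)
if there is a natural transformation `P : Hom_D(F −, F −) ⟶ Hom_X(I −, I −)` of functors
`Cᵒᵖ × C ⥤ Set` such that `P (F.map f) = I.map f` and `P` is compatible with composition. -/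
def HeavilyISeparable {C : Type*} [Category C] {D : Type*} [Category D]
    {X : Type*} [Category X] (F : C ⥤ D) (I : C ⥤ X) : Prop :=
  ∃ P : ∀ a b : C, (F.obj a ⟶ F.obj b) → (I.obj a ⟶ I.obj b),
    (∀ (a' a b b' : C) (u : a' ⟶ a) (v : b ⟶ b') (h : F.obj a ⟶ F.obj b),
        P a' b' (F.map u ≫ h ≫ F.map v) = I.map u ≫ P a b h ≫ I.map v) ∧
    (∀ (a b : C) (f : a ⟶ b), P a b (F.map f) = I.map f) ∧
    (∀ (a b c : C) (f : F.obj a ⟶ F.obj b) (g : F.obj b ⟶ F.obj c),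
        P a c (f ≫ g) = P a b f ≫ P b c g)

/-- A functor `F : C ⥤ D` is *heavily separable* if it is heavily `𝟭 C`-separable. -/
def HeavilySeparable {C : Type*} [Category C] {D : Type*} [Category D] (F : C ⥤ D) : Prop :=
  HeavilyISeparable F (𝟭 C)

universe u

namespace CMHS
open MulOpposite

abbrev R2 := Matrix (Fin 2) (Fin 2) ℝ

lemma oss {R : Type*} [Ring R] {M : Type*} [AddCommGroup M] [Module Rᵐᵒᵖ M]
    (z w : R) (m : M) : op z • op w • m = op (w * z) • m := by
  rw [smul_smul, ← MulOpposite.op_mul]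

section inst
variable {M N : Type u} [AddCommGroup M] [Module ℂᵐᵒᵖ M] [AddCommGroup N] [Module ℂᵐᵒᵖ N]

instance prodSMul : SMul R2ᵐᵒᵖ (M × M) where
  smul A x := (op ((A.unop 0 0 : ℂ)) • x.1 + op ((A.unop 1 0 : ℂ)) • x.2,
    op ((A.unop 0 1 : ℂ)) • x.1 + op ((A.unop 1 1 : ℂ)) • x.2)

lemma psmul_def (A : R2ᵐᵒᵖ) (x : M × M) :
    A • x = (op ((A.unop 0 0 : ℂ)) • x.1 + op ((A.unop 1 0 : ℂ)) • x.2,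
      op ((A.unop 0 1 : ℂ)) • x.1 + op ((A.unop 1 1 : ℂ)) • x.2) := rfl

instance prodModule : Module R2ᵐᵒᵖ (M × M) where
  one_smul x := by
    simp [psmul_def, Matrix.one_apply, Prod.ext_iff]
  mul_smul A B x := by
    refine Prod.ext ?_ ?_ <;>
    · simp only [psmul_def, MulOpposite.unop_mul, Matrix.mul_apply, Fin.sum_univ_two, smul_add,
        oss, Complex.ofReal_add, Complex.ofReal_mul, MulOpposite.op_add, MulOpposite.op_mul]
      module
  smul_zero A := by
    simp [psmul_def, Prod.ext_iff]
  smul_add A x y := by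
    refine Prod.ext ?_ ?_ <;>
    · simp only [psmul_def, Prod.fst_add, Prod.snd_add, smul_add]
      module
  add_smul A B x := by
    refine Prod.ext ?_ ?_ <;>
    · simp only [psmul_def, MulOpposite.unop_add, Matrix.add_apply, Complex.ofReal_add,
        MulOpposite.op_add, Prod.fst_add, Prod.snd_add, add_smul]
      module
  zero_smul x := by
    simp [psmul_def, Prod.ext_iff]

/-- `f × f` as an `M₂(ℝ)ᵐᵒᵖ`-linear map. -/
def emap (f : M →ₗ[ℂᵐᵒᵖ] N) : (M × M) →ₗ[R2ᵐᵒᵖ] (N × N) where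
  toFun x := (f x.1, f x.2)
  map_add' x y := by simp [Prod.ext_iff]
  map_smul' A x := by
    refine Prod.ext ?_ ?_ <;>
      simp [psmul_def, map_add, map_smul]

end inst

/-- The concrete model of extension of scalars along `φ : ℂ → M₂(ℝ)`:
`M ↦ M × M` with a suitable right `M₂(ℝ)`-action. -/
noncomputable abbrev EE : ModuleCat.{u} ℂᵐᵒᵖ ⥤ ModuleCat.{u} R2ᵐᵒᵖ where
  obj M := ModuleCat.of R2ᵐᵒᵖ (M × M)
  map {M N} f := ModuleCat.ofHom (emap f.hom)
  map_id _ := rfl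
  map_comp _ _ := rfl

variable (φ : ℂ →+* R2) (hφ : ∀ z : ℂ, φ z = !![z.re, -z.im; z.im, z.re])

/-- `e₀ = E₀₀`. -/
def e0 : R2 := !![1,0;0,0]
/-- `e₁ = E₀₁`. -/
def e1 : R2 := !![0,1;0,0]

section entries
include hφ

lemma phi00 (z : ℂ) : φ z 0 0 = z.re := by rw [hφ]; simp
lemma phi01 (z : ℂ) : φ z 0 1 = -z.im := by rw [hφ]; simp
lemma phi10 (z : ℂ) : φ z 1 0 = z.im := by rw [hφ]; simp
lemma phi11 (z : ℂ) : φ z 1 1 = z.re := by rw [hφ]; simp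

lemma me0 (B : R2) : e0 * B = φ ((B 0 0 : ℂ)) * e0 + φ ((B 0 1 : ℂ)) * e1 := by
  ext i j
  fin_cases i <;> fin_cases j <;>
    simp [e0, e1, hφ, Matrix.mul_apply, Fin.sum_univ_two]

lemma me1 (B : R2) : e1 * B = φ ((B 1 0 : ℂ)) * e0 + φ ((B 1 1 : ℂ)) * e1 := by
  ext i j
  fin_cases i <;> fin_cases j <;>
    simp [e0, e1, hφ, Matrix.mul_apply, Fin.sum_univ_two]

lemma hone : e0 + φ Complex.I * e1 = 1 := by
  ext i j
  fin_cases i <;> fin_cases j <;>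
    simp [e0, e1, hφ, Matrix.mul_apply, Fin.sum_univ_two, Matrix.one_apply]

end entries

section pair
variable {M : Type u} [AddCommGroup M] [Module ℂᵐᵒᵖ M]

include hφ in
lemma smul_pair_phi (w : ℂ) (m : M) :
    op (φ w) • ((m, op Complex.I • m) : M × M)
      = (op w • m, op Complex.I • (op w • m)) := by
  rw [psmul_def]
  have h1 : ((w.re : ℝ) : ℂ) + Complex.I * ((w.im : ℝ) : ℂ) = w := by
    rw [mul_comm]; exact Complex.re_add_im w
  have h2 : ((-w.im : ℝ) : ℂ) + Complex.I * ((w.re : ℝ) : ℂ) = w * Complex.I := by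
    simp [Complex.ext_iff]
  refine Prod.ext ?_ ?_
  · simp only [unop_op, phi00 φ hφ, phi10 φ hφ, oss]
    conv_rhs => rw [← h1, MulOpposite.op_add, add_smul]
  · simp only [unop_op, phi01 φ hφ, phi11 φ hφ, oss]
    conv_rhs => rw [← h2, MulOpposite.op_add, add_smul]

end pair


section adj
open ModuleCat

lemma rop (ψ : ℂ →+* R2) (w : ℂ) : (RingHom.op ψ) (op w) = op (ψ w) := rfl

set_option maxHeartbeats 2000000 in
/-- The hom-set equivalence exhibiting `EE` as left adjoint to restriction along `φ`. -/
noncomputable def homEq (M : ModuleCat.{u} ℂᵐᵒᵖ) (Y : ModuleCat.{u} R2ᵐᵒᵖ) :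
    (EE.obj M ⟶ Y) ≃ (M ⟶ (ModuleCat.restrictScalars (RingHom.op φ)).obj Y) where
  toFun f :=
    ModuleCat.ofHom (Y := (ModuleCat.restrictScalars (RingHom.op φ)).obj Y) <|
    { toFun := fun m => f.hom ((m, op Complex.I • m) : M × M)
      map_add' := fun x y => by
        show f.hom _ = f.hom _ + f.hom _
        rw [← map_add f.hom, Prod.mk_add_mk, ← smul_add]
      map_smul' := fun z m => by
        obtain ⟨w⟩ := z
        show f.hom _ = (RingHom.op φ) (op w) • f.hom _
        rw [rop, ← map_smul f.hom (op (φ w)), smul_pair_phi φ hφ]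
        rfl }
  invFun g :=
    ModuleCat.ofHom <|
    { toFun := fun x => op e0 • g.hom x.1 + op e1 • g.hom x.2
      map_add' := fun x y => by
        show op e0 • g.hom (x.1 + y.1) + op e1 • g.hom (x.2 + y.2) = _
        rw [map_add, map_add, smul_add, smul_add]
        abel
      map_smul' := fun A x => by
        show op e0 • g.hom _ + op e1 • g.hom _ = A • (op e0 • g.hom x.1 + op e1 • g.hom x.2)
        rw [psmul_def]
        simp only [Prod.fst, Prod.snd]
        rw [map_add g.hom, map_add g.hom, map_smul g.hom, map_smul g.hom, map_smul g.hom, map_smul g.hom]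
        simp only [restrictScalars.smul_def, rop]
        have key : ∀ u v : (Y : Type u), op e0 • (op (φ ((unop A 0 0 : ℝ) : ℂ)) • u
            + op (φ ((unop A 1 0 : ℝ) : ℂ)) • v) + op e1 • (op (φ ((unop A 0 1 : ℝ) : ℂ)) • u
            + op (φ ((unop A 1 1 : ℝ) : ℂ)) • v) = A • (op e0 • u + op e1 • v) := fun u v => by
          conv_rhs => rw [← MulOpposite.op_unop A]
          simp only [smul_add, oss]
          rw [me0 φ hφ (unop A), me1 φ hφ (unop A), MulOpposite.op_add, MulOpposite.op_add,
            add_smul, add_smul]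
          abel
        exact key _ _ }
  left_inv f := by
    apply ModuleCat.hom_ext
    apply LinearMap.ext
    intro x
    show op e0 • f.hom _ + op e1 • f.hom _ = f.hom x
    rw [← map_smul f.hom (op e0), ← map_smul f.hom (op e1), ← map_add f.hom]
    congr 1
    rw [psmul_def, psmul_def, Prod.mk_add_mk]
    simp [e0, e1]
  right_inv g := by
    apply ModuleCat.hom_ext
    apply LinearMap.ext
    intro m
    show op e0 • g.hom m + op e1 • g.hom (op Complex.I • m) = g.hom m
    rw [map_smul g.hom (op Complex.I) m]
    simp only [restrictScalars.smul_def, rop]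
    have key : ∀ v : (Y : Type u), op e0 • v + op e1 • op (φ Complex.I) • v = v := fun v => by
      rw [oss, ← add_smul, ← MulOpposite.op_add, hone φ hφ, MulOpposite.op_one, one_smul]
    exact key _

/-- The adjunction between the model `EE` and restriction of scalars along `φ`. -/
noncomputable def adjE : EE.{u} ⊣ ModuleCat.restrictScalars (RingHom.op φ) :=
  Adjunction.mkOfHomEquiv
    { homEquiv := homEq φ hφ
      homEquiv_naturality_left_symm := fun {M' M Y} f g => by
        apply ModuleCat.hom_ext; apply LinearMap.ext; intro x; rfl
      homEquiv_naturality_right := fun {M Y Y'} f g => by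
        apply ModuleCat.hom_ext; apply LinearMap.ext; intro m; rfl }

end adj

section PE
open ModuleCat

set_option maxHeartbeats 2000000 in
/-- The heavy separability data: restrict a morphism `EE a ⟶ EE b` along `m ↦ (m, m·i)`
and take the first component. -/
noncomputable def PE (a b : ModuleCat.{u} ℂᵐᵒᵖ) (g : EE.obj a ⟶ EE.obj b) :
    (ModuleCat.restrictScalars (RingHom.op Complex.ofRealHom)).obj a ⟶
      (ModuleCat.restrictScalars (RingHom.op Complex.ofRealHom)).obj b := ModuleCat.ofHom
    (X := (ModuleCat.restrictScalars (RingHom.op Complex.ofRealHom)).obj a)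
    (Y := (ModuleCat.restrictScalars (RingHom.op Complex.ofRealHom)).obj b) {
  toFun := fun m => (g.hom ((m, op Complex.I • m) : a × a)).1
  map_add' := fun x y => by
    show (g.hom _).1 = (g.hom _).1 + (g.hom _).1
    rw [← Prod.fst_add, ← map_add g.hom]
    erw [Prod.mk_add_mk, ← smul_add]
    rfl
  map_smul' := fun r m => by
    obtain ⟨s⟩ := r
    show (g.hom ((op ((s : ℂ)) • m, op Complex.I • (op ((s : ℂ)) • m)) : a × a)).1
      = op ((s : ℂ)) • (g.hom ((m, op Complex.I • m) : a × a)).1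
    erw [← smul_pair_phi φ hφ, map_smul g.hom, psmul_def]
    simp [phi00 φ hφ, phi10 φ hφ]
    rfl }

set_option maxHeartbeats 2000000 in
/-- The first component of `g y` only depends on the first component of `y`. -/
lemma fst_eq (a b : ModuleCat.{u} ℂᵐᵒᵖ) (g : EE.obj a ⟶ EE.obj b) (y : ↑a × ↑a) :
    (g.hom y).1 = (g.hom ((y.1, op Complex.I • y.1) : ↑a × ↑a)).1 := by
  set J : R2 := !![1,0;0,-1] with hJ
  set p : ↑a := op ((1/2 : ℂ)) • y.1 + op (-Complex.I/2) • y.2 with hp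
  set q : ↑a := op ((1/2 : ℂ)) • y.1 + op (Complex.I/2) • y.2 with hq
  have hsum : p + q = y.1 := by
    rw [hp, hq, add_add_add_comm, ← add_smul, ← MulOpposite.op_add, ← add_smul,
      ← MulOpposite.op_add]
    norm_num
  have c1 : ((1:ℂ)/2) + -((1:ℂ)/2) = 0 := by ring
  have c2 : (-Complex.I/2) + -(Complex.I/2) = -Complex.I := by ring
  have c3 : -Complex.I * Complex.I = 1 := by simp [Complex.I_mul_I]
  have hpq : p + -q = op (-Complex.I) • y.2 := by
    rw [hp, hq, neg_add, add_add_add_comm, ← neg_smul, ← neg_smul,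
      ← MulOpposite.op_neg, ← MulOpposite.op_neg, ← add_smul, ← add_smul,
      ← MulOpposite.op_add, ← MulOpposite.op_add, c1, c2, MulOpposite.op_zero,
      zero_smul, zero_add]
  have hdiff : op Complex.I • p + -(op Complex.I • q) = y.2 := by
    rw [← smul_neg, ← smul_add, hpq, oss, c3, MulOpposite.op_one, one_smul]
  have hJq : (op J • ((q, op Complex.I • q) : ↑a × ↑a)) = (q, -(op Complex.I • q)) := by
    rw [psmul_def]
    refine Prod.ext ?_ ?_ <;> simp [hJ]
  have hdec : ((p, op Complex.I • p) : ↑a × ↑a) + op J • ((q, op Complex.I • q) : ↑a × ↑a)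
      = y := by
    rw [hJq, Prod.mk_add_mk]
    exact Prod.ext hsum hdiff
  calc (g.hom y).1
      = (g.hom (((p, op Complex.I • p) : ↑a × ↑a) + op J • ((q, op Complex.I • q) : ↑a × ↑a))).1 := by
        rw [hdec]
    _ = (g.hom ((p, op Complex.I • p) : ↑a × ↑a)).1
          + (op J • g.hom ((q, op Complex.I • q) : ↑a × ↑a)).1 := by
        rw [map_add g.hom, map_smul g.hom, Prod.fst_add]
    _ = (g.hom ((p, op Complex.I • p) : ↑a × ↑a)).1 + (g.hom ((q, op Complex.I • q) : ↑a × ↑a)).1 := by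
        congr 1
        rw [psmul_def]
        simp [hJ]
    _ = (g.hom ((p + q, op Complex.I • (p + q)) : ↑a × ↑a)).1 := by
        rw [← Prod.fst_add, ← map_add g.hom, Prod.mk_add_mk, ← smul_add]
    _ = (g.hom ((y.1, op Complex.I • y.1) : ↑a × ↑a)).1 := by rw [hsum]

set_option maxHeartbeats 1000000 in
lemma PE_comp (a b c : ModuleCat.{u} ℂᵐᵒᵖ) (f : EE.obj a ⟶ EE.obj b)
    (g : EE.obj b ⟶ EE.obj c) :
    PE φ hφ a c (f ≫ g) = PE φ hφ a b f ≫ PE φ hφ b c g := by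
  apply ModuleCat.hom_ext
  apply LinearMap.ext
  intro m
  exact fst_eq b c g (f.hom ((m, op Complex.I • m) : ↑a × ↑a))

set_option maxHeartbeats 1000000 in
lemma PE_map (a b : ModuleCat.{u} ℂᵐᵒᵖ) (u : a ⟶ b) :
    PE φ hφ a b (EE.map u)
      = (ModuleCat.restrictScalars (RingHom.op Complex.ofRealHom)).map u := by
  apply ModuleCat.hom_ext
  apply LinearMap.ext
  intro m
  rfl

end PE
end CMHS

/-- For `φ : ℂ → M₂(ℝ)`, `φ(a+ib) = [[a,-b],[b,a]]`, and the inclusion `i : ℝ → ℂ`,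
the extension of scalars `φ^*` is heavily `i_*`-separable. -/
theorem complex_to_matrix_heavilyISeparable
    (φ : ℂ →+* Matrix (Fin 2) (Fin 2) ℝ)
    (hφ : ∀ z : ℂ, φ z = !![z.re, -z.im; z.im, z.re])
    (φUpper : ModuleCat.{u} ℂᵐᵒᵖ ⥤ ModuleCat.{u} (Matrix (Fin 2) (Fin 2) ℝ)ᵐᵒᵖ)
    (adj : φUpper ⊣ ModuleCat.restrictScalars (RingHom.op φ)) :
    HeavilyISeparable φUpper
      (ModuleCat.restrictScalars (RingHom.op Complex.ofRealHom)) := by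
  let α : φUpper ≅ CMHS.EE := adj.leftAdjointUniq (CMHS.adjE φ hφ)
  have hmap : ∀ (a b : ModuleCat.{u} ℂᵐᵒᵖ) (f : a ⟶ b),
      CMHS.PE φ hφ a b (α.inv.app a ≫ φUpper.map f ≫ α.hom.app b)
        = (ModuleCat.restrictScalars (RingHom.op Complex.ofRealHom)).map f := by
    intro a b f
    have key : α.inv.app a ≫ φUpper.map f ≫ α.hom.app b = CMHS.EE.map f := by
      rw [α.hom.naturality f, ← Category.assoc, Iso.inv_hom_id_app, Category.id_comp]
    rw [key, CMHS.PE_map]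
  have hcomp : ∀ (a b c : ModuleCat.{u} ℂᵐᵒᵖ) (f : φUpper.obj a ⟶ φUpper.obj b)
      (g : φUpper.obj b ⟶ φUpper.obj c),
      CMHS.PE φ hφ a c (α.inv.app a ≫ (f ≫ g) ≫ α.hom.app c)
        = CMHS.PE φ hφ a b (α.inv.app a ≫ f ≫ α.hom.app b)
          ≫ CMHS.PE φ hφ b c (α.inv.app b ≫ g ≫ α.hom.app c) := by
    intro a b c f g
    have key : α.inv.app a ≫ (f ≫ g) ≫ α.hom.app c
        = (α.inv.app a ≫ f ≫ α.hom.app b) ≫ (α.inv.app b ≫ g ≫ α.hom.app c) := by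
      simp
    rw [key, CMHS.PE_comp]
  refine ⟨fun a b f => CMHS.PE φ hφ a b (α.inv.app a ≫ f ≫ α.hom.app b),
    fun a' a b b' u v h => ?_, hmap, hcomp⟩
  show CMHS.PE φ hφ a' b' (α.inv.app a' ≫ (φUpper.map u ≫ h ≫ φUpper.map v) ≫ α.hom.app b') = _
  rw [hcomp a' a b' (φUpper.map u) (h ≫ φUpper.map v), hcomp a b b' h (φUpper.map v),
    hmap a' a u, hmap b b' v]
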